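/- Let F ∈ C⁰(closed unit disk, ℝ²) and suppose |F(x) − φ(x)| < δ for all x ∈ ∂B₁(0), where δ ∈ (0,1) and φ : ℝ² → ℝ² is a homeomorphism with φ(0) = 0 and min_{|x|=1} |φ(x)| ≥ 1. Then F(B₁(0)) ⊇ B_{1−δ}(0). -/

import Mathlib

open Metric

section AuxWinding
open Set Complex

/-- Continuous logarithm lift on a compact convex set. -/
lemma exists_continuousOn_log {E : Type*} [NormedAddCommGroup E] [NormedSpace ℝ E]
    {K : Set E} (hK : IsCompact K) (hconv : Convex ℝ K) {u : E → ℂ}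
    (hu : ContinuousOn u K) (h0 : ∀ x ∈ K, u x ≠ 0) :
    ∃ ℓ : E → ℂ, ContinuousOn ℓ K ∧ ∀ x ∈ K, Complex.exp (ℓ x) = u x := by
  rcases K.eq_empty_or_nonempty with rfl | ⟨x₀, hx₀⟩
  · exact ⟨0, continuousOn_const, fun x hx => absurd hx (Set.notMem_empty x)⟩
  obtain ⟨xm, hxm, hmin⟩ := hK.exists_isMinOn ⟨x₀, hx₀⟩ hu.norm
  set m : ℝ := ‖u xm‖ with hm_def
  have hm : 0 < m := norm_pos_iff.mpr (h0 xm hxm)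
  have hmin' : ∀ x ∈ K, m ≤ ‖u x‖ := fun x hx => hmin hx
  have huc := hK.uniformContinuousOn_of_continuous hu
  rw [Metric.uniformContinuousOn_iff] at huc
  obtain ⟨η, hη, hucη⟩ := huc m hm
  obtain ⟨xR, hxR, hmax⟩ := hK.exists_isMaxOn ⟨x₀, hx₀⟩
    ((continuous_id.sub continuous_const).norm.continuousOn)
  set R : ℝ := ‖xR - x₀‖ with hR_def
  have hmax' : ∀ x ∈ K, ‖x - x₀‖ ≤ R := fun x hx => hmax hx
  obtain ⟨n₀, hn₀⟩ := exists_nat_gt (R / η)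
  set N : ℕ := n₀ + 1 with hN_def
  have hNpos : (0:ℝ) < N := by positivity
  have hRN : R / N < η := by
    have h1 : R / η < N := lt_of_lt_of_le hn₀ (by exact_mod_cast Nat.le_succ n₀)
    have h2 : R < η * N := by
      rw [div_lt_iff₀ hη] at h1; linarith [h1]
    rw [div_lt_iff₀ hNpos]; linarith
  set c : ℕ → E → E := fun j x => x₀ + ((j : ℝ) / N) • (x - x₀) with hc_def
  have hcK : ∀ j, j ≤ N → ∀ x ∈ K, c j x ∈ K := by
    intro j hj x hx
    set t : ℝ := (j : ℝ) / N with ht_def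
    have ht0 : 0 ≤ t := by positivity
    have ht1 : t ≤ 1 := by
      rw [ht_def, div_le_one hNpos]; exact_mod_cast hj
    have : c j x = (1 - t) • x₀ + t • x := by
      rw [hc_def]; simp only [← ht_def]
      rw [sub_smul, one_smul, smul_sub]; abel
    rw [this]
    exact hconv hx₀ hx (by linarith) ht0 (by ring)
  have hccont : ∀ j : ℕ, Continuous (c j) := fun j =>
    continuous_const.add ((continuous_id.sub continuous_const).const_smul _)
  have hstep : ∀ j, j + 1 ≤ N → ∀ x ∈ K, ‖u (c (j+1) x) - u (c j x)‖ < m := by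
    intro j hj x hx
    have hd : dist (c (j+1) x) (c j x) < η := by
      rw [dist_eq_norm]
      have : c (j+1) x - c j x = ((1 : ℝ) / N) • (x - x₀) := by
        rw [hc_def]; simp only []
        rw [add_sub_add_left_eq_sub, ← sub_smul]
        congr 1
        push_cast; ring
      rw [this, norm_smul]
      have h1 : ‖(1:ℝ)/(N:ℝ)‖ = 1 / N := by
        rw [Real.norm_eq_abs, abs_of_pos (by positivity)]
      rw [h1]
      calc 1 / (N:ℝ) * ‖x - x₀‖ ≤ 1 / N * R := by
            apply mul_le_mul_of_nonneg_left (hmax' x hx) (by positivity)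
        _ = R / N := by ring
        _ < η := hRN
    have := hucη _ (hcK (j+1) hj x hx) _ (hcK j (le_trans (Nat.le_succ j) hj) x hx) hd
    rwa [dist_eq_norm] at this
  have key : ∀ j, j ≤ N → ∃ ℓ : E → ℂ, ContinuousOn ℓ K ∧
      ∀ x ∈ K, Complex.exp (ℓ x) = u (c j x) := by
    intro j
    induction j with
    | zero =>
      intro _
      refine ⟨fun _ => Complex.log (u x₀), continuousOn_const, fun x hx => ?_⟩
      have : c 0 x = x₀ := by rw [hc_def]; simp
      rw [this, Complex.exp_log (h0 x₀ hx₀)]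
    | succ j ih =>
      intro hj
      obtain ⟨ℓ, hℓc, hℓ⟩ := ih (le_trans (Nat.le_succ j) hj)
      set q : E → ℂ := fun x => u (c (j+1) x) / u (c j x) with hq_def
      have hne : ∀ x ∈ K, u (c j x) ≠ 0 := fun x hx => h0 _ (hcK j (le_trans (Nat.le_succ j) hj) x hx)
      have hne' : ∀ x ∈ K, u (c (j+1) x) ≠ 0 := fun x hx => h0 _ (hcK (j+1) hj x hx)
      have hq1 : ∀ x ∈ K, ‖q x - 1‖ < 1 := by
        intro x hx
        have : q x - 1 = (u (c (j+1) x) - u (c j x)) / u (c j x) := by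
          rw [hq_def]; exact div_sub_one (hne x hx)
        rw [this, norm_div, div_lt_one (norm_pos_iff.mpr (hne x hx))]
        exact lt_of_lt_of_le (hstep j hj x hx) (hmin' _ (hcK j (le_trans (Nat.le_succ j) hj) x hx))
      have hslit : ∀ x ∈ K, q x ∈ Complex.slitPlane := by
        intro x hx
        rw [Complex.mem_slitPlane_iff]
        left
        have h1 := hq1 x hx
        have h2 : |(q x - 1).re| ≤ ‖q x - 1‖ := Complex.abs_re_le_norm _
        have h3 : (q x - 1).re = (q x).re - 1 := by simp
        rw [h3] at h2
        have := abs_lt.mp (lt_of_le_of_lt h2 h1)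
        linarith [this.1]
      have hqcont : ContinuousOn q K := by
        apply ContinuousOn.div
        · exact hu.comp (hccont (j+1)).continuousOn (fun x hx => hcK (j+1) hj x hx)
        · exact hu.comp (hccont j).continuousOn (fun x hx => hcK j (le_trans (Nat.le_succ j) hj) x hx)
        · exact hne
      refine ⟨fun x => ℓ x + Complex.log (q x), hℓc.add (hqcont.clog hslit), fun x hx => ?_⟩
      rw [Complex.exp_add, hℓ x hx, Complex.exp_log (by
        rw [hq_def]; exact div_ne_zero (hne' x hx) (hne x hx))]
      rw [hq_def]
      rw [mul_comm, div_mul_cancel₀ _ (hne x hx)]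
  obtain ⟨ℓ, h1, h2⟩ := key N le_rfl
  refine ⟨ℓ, h1, fun x hx => ?_⟩
  rw [h2 x hx]
  congr 1
  rw [hc_def]
  simp only []
  rw [div_self (ne_of_gt hNpos), one_smul]
  abel


lemma const_of_int_lift {g : ℝ → ℂ} (hg : ContinuousOn g (Set.Icc 0 1))
    (h : ∀ t ∈ Set.Icc (0:ℝ) 1, ∃ k : ℤ, g t = k * (2 * Real.pi * Complex.I)) :
    g 0 = g 1 := by
  have h0 : (0:ℝ) ∈ Set.Icc (0:ℝ) 1 := ⟨le_refl _, zero_le_one⟩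
  have h1 : (1:ℝ) ∈ Set.Icc (0:ℝ) 1 := ⟨zero_le_one, le_refl _⟩
  obtain ⟨k0, hk0⟩ := h 0 h0
  obtain ⟨k1, hk1⟩ := h 1 h1
  suffices hk : k0 = k1 by rw [hk0, hk1, hk]
  by_contra hne
  set r : ℝ → ℝ := fun t => (g t).im / (2 * Real.pi) with hr_def
  have hrc : ContinuousOn r (Set.Icc 0 1) :=
    (Complex.continuous_im.comp_continuousOn hg).div_const _
  have him : ∀ k : ℤ, ((k : ℂ) * (2 * Real.pi * Complex.I)).im = k * (2 * Real.pi) := by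
    intro k; simp [Complex.mul_im]
  have hrint : ∀ t ∈ Set.Icc (0:ℝ) 1, ∃ k : ℤ, r t = k := by
    intro t ht
    obtain ⟨k, hk⟩ := h t ht
    exact ⟨k, by rw [hr_def]; simp only [hk, him]; field_simp [Real.pi_ne_zero]⟩
  have hr0 : r 0 = k0 := by
    rw [hr_def]; simp only [hk0, him]; field_simp [Real.pi_ne_zero]
  have hr1 : r 1 = k1 := by
    rw [hr_def]; simp only [hk1, him]; field_simp [Real.pi_ne_zero]
  have key : ∀ a b : ℤ, a < b → r 0 = a → r 1 = b → False := by
    intro a b hab ha hb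
    have hmem : ((a : ℝ) + 1/2) ∈ Set.Icc (r 0) (r 1) := by
      constructor
      · rw [ha]; linarith
      · rw [hb]
        have : (a : ℝ) + 1 ≤ b := by exact_mod_cast hab
        linarith
    have := isPreconnected_Icc.intermediate_value h0 h1 hrc hmem
    obtain ⟨t, ht, hrt⟩ := this
    obtain ⟨k, hk⟩ := hrint t ht
    rw [hk] at hrt
    have : (2 * k : ℝ) = 2 * a + 1 := by linarith [hrt]
    have h2 : (2 * k : ℤ) = 2 * a + 1 := by exact_mod_cast this
    omega
  rcases lt_or_gt_of_ne hne with hlt | hgt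
  · exact key k0 k1 hlt hr0 hr1
  · -- symmetric: use value between k1 and k0 going from r 1 to r 0
    have hmem : ((k1 : ℝ) + 1/2) ∈ Set.Icc (r 1) (r 0) := by
      constructor
      · rw [hr1]; linarith
      · rw [hr0]
        have : (k1 : ℝ) + 1 ≤ k0 := by exact_mod_cast hgt
        linarith
    have := isPreconnected_Icc.intermediate_value h1 h0 hrc hmem
    obtain ⟨t, ht, hrt⟩ := this
    obtain ⟨k, hk⟩ := hrint t ht
    rw [hk] at hrt
    have : (2 * k : ℝ) = 2 * k1 + 1 := by linarith [hrt]
    have h2 : (2 * k : ℤ) = 2 * k1 + 1 := by exact_mod_cast this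
    omega

lemma lift_diff_eq {ℓ ℓ' : ℝ → ℂ} (hℓ : ContinuousOn ℓ (Set.Icc 0 1))
    (hℓ' : ContinuousOn ℓ' (Set.Icc 0 1))
    (h : ∀ t ∈ Set.Icc (0:ℝ) 1, Complex.exp (ℓ t) = Complex.exp (ℓ' t)) :
    ℓ 1 - ℓ 0 = ℓ' 1 - ℓ' 0 := by
  have hc := const_of_int_lift (g := fun t => ℓ t - ℓ' t) (hℓ.sub hℓ') (by
    intro t ht
    obtain ⟨n, hn⟩ := Complex.exp_eq_exp_iff_exists_int.mp (h t ht)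
    exact ⟨n, by rw [hn]; ring⟩)
  linear_combination -hc

lemma homotopy_lift_diff {H : ℝ → ℝ → ℂ}
    (hHc : ContinuousOn (fun q : ℝ × ℝ => H q.1 q.2) (Set.Icc 0 1 ×ˢ Set.Icc 0 1))
    (hH0 : ∀ s ∈ Set.Icc (0:ℝ) 1, ∀ t ∈ Set.Icc (0:ℝ) 1, H s t ≠ 0)
    (hloop : ∀ s ∈ Set.Icc (0:ℝ) 1, H s 0 = H s 1)
    {ℓ₀ ℓ₁ : ℝ → ℂ}
    (hℓ₀c : ContinuousOn ℓ₀ (Set.Icc 0 1))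
    (hℓ₀ : ∀ t ∈ Set.Icc (0:ℝ) 1, Complex.exp (ℓ₀ t) = H 0 t)
    (hℓ₁c : ContinuousOn ℓ₁ (Set.Icc 0 1))
    (hℓ₁ : ∀ t ∈ Set.Icc (0:ℝ) 1, Complex.exp (ℓ₁ t) = H 1 t) :
    ℓ₀ 1 - ℓ₀ 0 = ℓ₁ 1 - ℓ₁ 0 := by
  have h0 : (0:ℝ) ∈ Set.Icc (0:ℝ) 1 := ⟨le_refl _, zero_le_one⟩
  have h1 : (1:ℝ) ∈ Set.Icc (0:ℝ) 1 := ⟨zero_le_one, le_refl _⟩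
  obtain ⟨Λ, hΛc, hΛ⟩ := exists_continuousOn_log
    (isCompact_Icc.prod isCompact_Icc) ((convex_Icc (0:ℝ) 1).prod (convex_Icc (0:ℝ) 1))
    hHc (fun q hq => hH0 q.1 hq.1 q.2 hq.2)
  have hmem : ∀ s ∈ Set.Icc (0:ℝ) 1, ∀ t ∈ Set.Icc (0:ℝ) 1,
      ((s, t) : ℝ × ℝ) ∈ Set.Icc (0:ℝ) 1 ×ˢ Set.Icc (0:ℝ) 1 := fun s hs t ht => ⟨hs, ht⟩
  -- slice continuity helpers
  have hslice : ∀ t₀ ∈ Set.Icc (0:ℝ) 1, ContinuousOn (fun s => Λ (s, t₀)) (Set.Icc 0 1) := by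
    intro t₀ ht₀
    exact hΛc.comp (continuous_id.prodMk continuous_const).continuousOn
      (fun s hs => hmem s hs t₀ ht₀)
  have hslice' : ∀ s₀ ∈ Set.Icc (0:ℝ) 1, ContinuousOn (fun t => Λ (s₀, t)) (Set.Icc 0 1) := by
    intro s₀ hs₀
    exact hΛc.comp (continuous_const.prodMk continuous_id).continuousOn
      (fun t ht => hmem s₀ hs₀ t ht)
  have hg : (fun s => Λ (s, 1) - Λ (s, 0)) 0 = (fun s => Λ (s, 1) - Λ (s, 0)) 1 := by
    apply const_of_int_lift ((hslice 1 h1).sub (hslice 0 h0))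
    intro s hs
    have he : Complex.exp (Λ (s, 1)) = Complex.exp (Λ (s, 0)) := by
      rw [hΛ _ (hmem s hs 1 h1), hΛ _ (hmem s hs 0 h0)]
      exact (hloop s hs).symm
    obtain ⟨n, hn⟩ := Complex.exp_eq_exp_iff_exists_int.mp he
    exact ⟨n, by show Λ (s,1) - Λ (s,0) = _; rw [hn]; ring⟩

  have e0 : ℓ₀ 1 - ℓ₀ 0 = Λ (0, 1) - Λ (0, 0) := by
    apply lift_diff_eq hℓ₀c (hslice' 0 h0)
    intro t ht
    rw [hℓ₀ t ht, hΛ _ (hmem 0 h0 t ht)]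
  have e1 : ℓ₁ 1 - ℓ₁ 0 = Λ (1, 1) - Λ (1, 0) := by
    apply lift_diff_eq hℓ₁c (hslice' 1 h1)
    intro t ht
    rw [hℓ₁ t ht, hΛ _ (hmem 1 h1 t ht)]
  rw [e0, e1]; exact hg

end AuxWinding

section MainProof
open Set Complex

/-- if `F` is continuous on the closed unit disk and `δ`-close on the
unit circle to a homeomorphism `φ` of the plane with `φ(0)=0` and `|φ| ≥ 1` on the
unit circle, then `F(B₁(0)) ⊇ B_{1−δ}(0)`. -/
theorem image_contains_ball
    (F : EuclideanSpace ℝ (Fin 2) → EuclideanSpace ℝ (Fin 2))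
    (φ : EuclideanSpace ℝ (Fin 2) ≃ₜ EuclideanSpace ℝ (Fin 2))
    (δ : ℝ) (hδ0 : 0 < δ) (hδ1 : δ < 1)
    (hF : ContinuousOn F (closedBall 0 1))
    (hφ0 : φ 0 = 0)
    (hφ1 : ∀ x : EuclideanSpace ℝ (Fin 2), ‖x‖ = 1 → 1 ≤ ‖φ x‖)
    (hclose : ∀ x ∈ sphere (0 : EuclideanSpace ℝ (Fin 2)) 1, ‖F x - φ x‖ < δ) :
    ball (0 : EuclideanSpace ℝ (Fin 2)) (1 - δ) ⊆ F '' ball 0 1 := by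
  
  intro y hy
  rw [mem_ball, dist_zero_right] at hy
  set Jc : EuclideanSpace ℝ (Fin 2) ≃ₗᵢ[ℝ] ℂ := Complex.orthonormalBasisOneI.repr.symm with hJc
  set f : ℂ → ℂ := fun z => Jc (F (Jc.symm z)) with hf
  set ψ : ℂ → ℂ := fun z => Jc (φ (Jc.symm z)) with hψ
  set ψinv : ℂ → ℂ := fun z => Jc (φ.symm (Jc.symm z)) with hψinv
  set yc : ℂ := Jc y with hyc
  have hycn : ‖yc‖ < 1 - δ := by rw [hyc, Jc.norm_map]; exact hy
  by_contra hcon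
  -- if f z = yc with ‖z‖ < 1 we get a contradiction
  have hcon' : ∀ z : ℂ, ‖z‖ < 1 → f z ≠ yc := by
    intro z hz hEq
    apply hcon
    refine ⟨Jc.symm z, ?_, ?_⟩
    · rw [mem_ball, dist_zero_right, Jc.symm.norm_map]; exact hz
    · have h2 := congrArg Jc.symm hEq
      rw [hf] at h2
      simpa [hyc] using h2
  -- sphere facts
  have hsym_norm : ∀ z : ℂ, ‖Jc.symm z‖ = ‖z‖ := fun z => Jc.symm.norm_map z
  have hsphere : ∀ z : ℂ, ‖z‖ = 1 → Jc.symm z ∈ sphere (0 : EuclideanSpace ℝ (Fin 2)) 1 := by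
    intro z hz
    rw [mem_sphere, dist_zero_right, hsym_norm, hz]
  have hψnorm : ∀ z : ℂ, ‖z‖ = 1 → 1 ≤ ‖ψ z‖ := by
    intro z hz
    rw [hψ]; simp only []
    rw [Jc.norm_map]
    exact hφ1 _ (by rw [hsym_norm, hz])
  have hfψ : ∀ z : ℂ, ‖z‖ = 1 → ‖f z - ψ z‖ < δ := by
    intro z hz
    rw [hf, hψ]; simp only []
    rw [← map_sub, Jc.norm_map]
    exact hclose _ (hsphere z hz)
  have hcon'' : ∀ z : ℂ, ‖z‖ ≤ 1 → f z ≠ yc := by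
    intro z hz hEq
    rcases lt_or_eq_of_le hz with h | h
    · exact hcon' z h hEq
    · have h1 : 1 ≤ ‖ψ z‖ := hψnorm z h
      have h2 : ‖f z - ψ z‖ < δ := hfψ z h
      have h3 : ‖ψ z‖ - ‖f z‖ ≤ ‖ψ z - f z‖ := norm_sub_norm_le _ _
      rw [norm_sub_rev] at h3
      have h4 : ‖f z‖ < 1 - δ := by rw [hEq]; exact hycn
      linarith
  -- φ.symm y is in the unit ball
  have hball : ball (0 : EuclideanSpace ℝ (Fin 2)) 1 ⊆ φ '' ball 0 1 := by
    have hU : IsOpen (φ '' ball 0 1) := φ.isOpenMap _ isOpen_ball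
    have hV : IsOpen ((φ '' closedBall 0 1)ᶜ) :=
      (((isCompact_closedBall (0 : EuclideanSpace ℝ (Fin 2)) 1).image φ.continuous).isClosed).isOpen_compl
    have hdisj : Disjoint (φ '' ball 0 1) ((φ '' closedBall 0 1)ᶜ) := by
      rw [Set.disjoint_left]
      intro a ha ha'
      exact ha' (Set.image_mono ball_subset_closedBall ha)
    have hcover : ball (0 : EuclideanSpace ℝ (Fin 2)) 1 ⊆
        (φ '' ball 0 1) ∪ ((φ '' closedBall 0 1)ᶜ) := by
      intro z hz
      by_cases hzc : z ∈ φ '' closedBall 0 1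
      · left
        obtain ⟨x, hx, hxz⟩ := hzc
        rw [mem_closedBall, dist_zero_right] at hx
        rcases lt_or_eq_of_le hx with h | h
        · exact ⟨x, by rw [mem_ball, dist_zero_right]; exact h, hxz⟩
        · exfalso
          have := hφ1 x h
          rw [hxz] at this
          rw [mem_ball, dist_zero_right] at hz
          linarith
      · right; exact hzc
    have hne : (ball (0 : EuclideanSpace ℝ (Fin 2)) 1 ∩ φ '' ball 0 1).Nonempty := by
      refine ⟨0, ?_, 0, ?_, hφ0⟩
      · rw [mem_ball, dist_zero_right, norm_zero]; norm_num
      · rw [mem_ball, dist_zero_right, norm_zero]; norm_num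
    exact ((convex_ball (0 : EuclideanSpace ℝ (Fin 2)) 1).isPreconnected).subset_left_of_subset_union
      hU hV hdisj hcover hne
  have hpE : ‖φ.symm y‖ < 1 := by
    have hyb : y ∈ ball (0 : EuclideanSpace ℝ (Fin 2)) 1 := by
      rw [mem_ball, dist_zero_right]; linarith
    obtain ⟨x, hx, hxy⟩ := hball hyb
    rw [← hxy, Homeomorph.symm_apply_apply]
    rwa [mem_ball, dist_zero_right] at hx
  set p : ℂ := Jc (φ.symm y) with hp
  have hpn : ‖p‖ < 1 := by rw [hp, Jc.norm_map]; exact hpE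
  -- the circle parametrization
  set e : ℝ → ℂ := fun t => Complex.exp ((2 * Real.pi * t : ℝ) * Complex.I) with he
  have hen : ∀ t, ‖e t‖ = 1 := by
    intro t
    rw [he]; simp only []
    exact Complex.norm_exp_ofReal_mul_I _
  have he0 : e 0 = 1 := by rw [he]; simp
  have he1 : e 1 = 1 := by
    rw [he]; simp only []
    rw [show ((2 * Real.pi * 1 : ℝ) : ℂ) * Complex.I = 2 * Real.pi * Complex.I by
      push_cast; ring]
    exact Complex.exp_two_pi_mul_I
  have hec : Continuous e := by
    rw [he]
    exact Complex.continuous_exp.comp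
      ((Complex.continuous_ofReal.comp (continuous_const.mul continuous_id)).mul continuous_const)
  -- continuity of f, ψ, ψinv
  have hfc : ContinuousOn f (closedBall 0 1) := by
    rw [hf]
    apply Jc.continuous.comp_continuousOn
    apply hF.comp Jc.symm.continuous.continuousOn
    intro z hz
    rw [mem_closedBall, dist_zero_right] at hz ⊢
    rwa [hsym_norm]
  have hψc : Continuous ψ := by
    rw [hψ]; exact Jc.continuous.comp (φ.continuous.comp Jc.symm.continuous)
  have hψinvc : Continuous ψinv := by
    rw [hψinv]; exact Jc.continuous.comp (φ.symm.continuous.comp Jc.symm.continuous)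
  have hψinvψ : ∀ z, ψinv (ψ z) = z := by
    intro z; rw [hψ, hψinv]; simp
  have hψinvinj : Function.Injective ψinv := by
    intro a b hab
    rw [hψinv] at hab
    simp only [] at hab
    have h1 := Jc.injective hab
    have h2 := φ.symm.injective h1
    exact Jc.symm.injective h2
  have hψinvyc : ψinv yc = p := by
    rw [hψinv, hyc, hp]; simp
  -- the loops
  set α : ℝ → ℂ := fun t => f (e t) - yc with hα
  set β : ℝ → ℂ := fun t => ψ (e t) - yc with hβ
  have hemem : ∀ t : ℝ, e t ∈ closedBall (0:ℂ) 1 := by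
    intro t; rw [mem_closedBall, dist_zero_right, hen t]
  have hαc : ContinuousOn α (Set.Icc 0 1) := by
    rw [hα]
    exact ((hfc.comp hec.continuousOn (fun t _ => hemem t)).sub continuousOn_const)
  have hβc : Continuous β := by
    rw [hβ]; exact (hψc.comp hec).sub continuous_const
  have hβδ : ∀ t, δ < ‖β t‖ := by
    intro t
    have h1 : 1 ≤ ‖ψ (e t)‖ := hψnorm _ (hen t)
    have h2 : ‖ψ (e t)‖ - ‖yc‖ ≤ ‖ψ (e t) - yc‖ := norm_sub_norm_le _ _
    rw [hβ]; simp only []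
    linarith
  have hαβ : ∀ t, ‖α t - β t‖ < δ := by
    intro t
    rw [hα, hβ]; simp only []
    rw [show f (e t) - yc - (ψ (e t) - yc) = f (e t) - ψ (e t) by ring]
    exact hfψ _ (hen t)
  have hαloop : α 0 = α 1 := by rw [hα]; simp only []; rw [he0, he1]
  have hβloop0 : β 0 = β 1 := by rw [hβ]; simp only []; rw [he0, he1]
  -- lift of α via disk extension: winding of α is 0
  obtain ⟨L, hLc, hL⟩ := exists_continuousOn_log (isCompact_closedBall (0:ℂ) 1)
    (convex_closedBall (0:ℂ) 1) (u := fun z => f z - yc)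
    (hfc.sub continuousOn_const)
    (fun z hz => sub_ne_zero.mpr (hcon'' z (by rwa [mem_closedBall, dist_zero_right] at hz)))
  set ℓα : ℝ → ℂ := fun t => L (e t) with hℓα
  have hℓαc : ContinuousOn ℓα (Set.Icc 0 1) := by
    rw [hℓα]
    exact hLc.comp hec.continuousOn (fun t _ => hemem t)
  have hℓαlift : ∀ t ∈ Set.Icc (0:ℝ) 1, Complex.exp (ℓα t) = α t := by
    intro t _
    rw [hℓα, hα]; simp only []
    exact hL _ (hemem t)
  have hℓαloop : ℓα 1 - ℓα 0 = 0 := by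
    rw [hℓα]; simp only []
    rw [he0, he1, sub_self]
  -- lift of β
  obtain ⟨ℓβ, hℓβc, hℓβ⟩ := exists_continuousOn_log isCompact_Icc (convex_Icc (0:ℝ) 1)
    (u := β) hβc.continuousOn
    (fun t _ => by
      have := hβδ t
      intro hzero
      rw [hzero, norm_zero] at this
      linarith)
  -- homotopy 1 : α to β, conclude ℓβ 1 = ℓβ 0
  have hW1 := homotopy_lift_diff (H := fun s t => α t + (s:ℂ) * (β t - α t)) (ℓ₀ := ℓα) (ℓ₁ := ℓβ)
    (by
      apply ContinuousOn.add
      · exact hαc.comp continuous_snd.continuousOn (fun q hq => hq.2)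
      · apply ContinuousOn.mul
        · exact (Complex.continuous_ofReal.comp continuous_fst).continuousOn
        · exact ((hβc.comp continuous_snd).continuousOn.sub
            (hαc.comp continuous_snd.continuousOn (fun q hq => hq.2))))
    (by
      intro s hs t ht hzero
      have hd : α t + (s:ℂ) * (β t - α t) - β t = (1 - (s:ℂ)) * (α t - β t) := by ring
      have hnorm : ‖α t + (s:ℂ) * (β t - α t) - β t‖ ≤ ‖α t - β t‖ := by
        rw [hd, norm_mul]
        have : ‖(1 - (s:ℂ))‖ = 1 - s := by
          rw [show (1 - (s:ℂ)) = ((1 - s : ℝ) : ℂ) by push_cast; ring, Complex.norm_real]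
          rw [Real.norm_eq_abs, _root_.abs_of_nonneg (by linarith [hs.2])]
        rw [this]
        nlinarith [norm_nonneg (α t - β t), hs.1, hs.2]
      rw [hzero] at hnorm
      rw [zero_sub, norm_neg] at hnorm
      linarith [hαβ t, hβδ t]
    )
    (by intro s _; rw [hαloop, hβloop0])
    hℓαc
    (by intro t ht; rw [hℓαlift t ht]; push_cast; ring)
    hℓβc
    (by intro t ht; rw [hℓβ t ht]; push_cast; ring)
  rw [hℓαloop] at hW1
  have hβloop : ℓβ 1 = ℓβ 0 := by
    have := hW1.symm
    linear_combination this
  -- lift of γ = e - p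
  obtain ⟨ℓγ, hℓγc, hℓγ⟩ := exists_continuousOn_log isCompact_Icc (convex_Icc (0:ℝ) 1)
    (u := fun t => e t - p) ((hec.sub continuous_const).continuousOn)
    (fun t _ => sub_ne_zero.mpr (by
      intro hEq
      rw [← hEq, hen t] at hpn
      linarith))
  -- homotopy 2 : e to e - p, conclude ℓγ 1 - ℓγ 0 = 2 π I
  set ℓe : ℝ → ℂ := fun t => ((2 * Real.pi * t : ℝ) : ℂ) * Complex.I with hℓe
  have hW2 := homotopy_lift_diff (H := fun s t => e t - (s:ℂ) * p) (ℓ₀ := ℓe) (ℓ₁ := ℓγ)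
    (by
      apply ContinuousOn.sub
      · exact (hec.comp continuous_snd).continuousOn
      · exact ((Complex.continuous_ofReal.comp continuous_fst).mul continuous_const).continuousOn)
    (by
      intro s hs t ht hzero
      have h1 : ‖(s:ℂ) * p‖ ≤ ‖p‖ := by
        rw [norm_mul, Complex.norm_real, Real.norm_eq_abs, _root_.abs_of_nonneg hs.1]
        nlinarith [norm_nonneg p, hs.2]
      have h2 : ‖e t‖ - ‖(s:ℂ) * p‖ ≤ ‖e t - (s:ℂ) * p‖ := norm_sub_norm_le _ _
      rw [hzero, norm_zero, hen t] at h2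
      linarith
    )
    (by intro s _; rw [he0, he1])
    (by
      rw [hℓe]
      exact ((Complex.continuous_ofReal.comp (continuous_const.mul continuous_id)).mul
        continuous_const).continuousOn)
    (by
      intro t _
      simp only [hℓe, he]
      push_cast; ring_nf)
    hℓγc
    (by intro t ht; rw [hℓγ t ht]; push_cast; ring)
  have hℓediff : ℓe 1 - ℓe 0 = 2 * Real.pi * Complex.I := by
    rw [hℓe]; simp only []
    push_cast; ring
  rw [hℓediff] at hW2
  -- homotopy 3 : nullhomotopy of e - p from ℓβ; contradiction
  have h1p : (1 : ℂ) - p ≠ 0 := by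
    intro hEq
    have : p = 1 := by linear_combination -hEq
    rw [this, norm_one] at hpn
    linarith
  have hic0 : (0:ℝ) ∈ Set.Icc (0:ℝ) 1 := ⟨le_refl _, zero_le_one⟩
  have hic1 : (1:ℝ) ∈ Set.Icc (0:ℝ) 1 := ⟨zero_le_one, le_refl _⟩
  have hW3 := homotopy_lift_diff
    (H := fun s t => ψinv (Complex.exp ((1 - (s:ℂ)) * ℓβ t + (s:ℂ) * ℓβ 0) + yc) - p)
    (ℓ₀ := ℓγ) (ℓ₁ := fun _ => Complex.log (1 - p))
    (by
      apply ContinuousOn.sub _ continuousOn_const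
      apply hψinvc.comp_continuousOn
      apply ContinuousOn.add _ continuousOn_const
      apply Complex.continuous_exp.comp_continuousOn
      apply ContinuousOn.add
      · exact (continuous_const.sub (Complex.continuous_ofReal.comp continuous_fst)).continuousOn.mul
          (hℓβc.comp continuous_snd.continuousOn (fun q hq => hq.2))
      · exact ((Complex.continuous_ofReal.comp continuous_fst).mul continuous_const).continuousOn)
    (by
      intro s hs t ht hzero
      rw [sub_eq_zero] at hzero
      rw [← hψinvyc] at hzero
      have := hψinvinj hzero
      have h2 : Complex.exp ((1 - (s:ℂ)) * ℓβ t + (s:ℂ) * ℓβ 0) = 0 := by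
        linear_combination this
      exact Complex.exp_ne_zero _ h2)
    (by intro s _; rw [hβloop])
    hℓγc
    (by
      intro t ht
      rw [hℓγ t ht]
      rw [show (1 - ((0:ℝ):ℂ)) * ℓβ t + ((0:ℝ):ℂ) * ℓβ 0 = ℓβ t by push_cast; ring]
      rw [hℓβ t ht]
      rw [show β t + yc = ψ (e t) by rw [hβ]; ring]
      rw [hψinvψ])
    continuousOn_const
    (by
      intro t _
      rw [show (1 - ((1:ℝ):ℂ)) * ℓβ t + ((1:ℝ):ℂ) * ℓβ 0 = ℓβ 0 by push_cast; ring]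
      rw [hℓβ 0 hic0]
      rw [show β 0 + yc = ψ (e 0) by rw [hβ]; ring]
      rw [hψinvψ, he0]
      exact Complex.exp_log h1p)
  rw [← hW2] at hW3
  rw [sub_self] at hW3
  exact Complex.two_pi_I_ne_zero hW3

end MainProof
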